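/- Every entry of an admissible configuration of size n (n ≥ 1) is at most 2n − 1. -/

import Mathlib

/-- The maximum entry of a finite set of integers (`0` for the empty set). -/
def fmax (C : Finset ℤ) : ℤ := WithBot.unbotD 0 C.max

/-- The minimum entry of a finite set of integers (`0` for the empty set). -/
def fmin (C : Finset ℤ) : ℤ := WithTop.untopD 0 C.min

/-- A *chain* is a nonempty set of integers of the form `{c, c-2, …, c-2k}`. -/
def IsChainSet (C : Finset ℤ) : Prop :=
  ∃ (c : ℤ) (k : ℕ), C = (Finset.range (k + 1)).image (fun i : ℕ => c - 2 * (i : ℤ))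

/-- Two chains with disjoint entries, with maxima `A, B` and minima `a, b`, are *linked*
if `A > B > a` or `B > A > b`. -/
def LinkedChains (C D : Finset ℤ) : Prop :=
  Disjoint C D ∧
    ((fmax D < fmax C ∧ fmin C < fmax D) ∨ (fmax C < fmax D ∧ fmin D < fmax C))

/-- The set of all entries of a collection of chains. -/
def entriesOf (S : Finset (Finset ℤ)) : Finset ℤ := S.biUnion id

/-- A finite collection of pairwise disjoint chains. -/
def IsChainCollection (S : Finset (Finset ℤ)) : Prop :=
  (∀ C ∈ S, IsChainSet C) ∧ ∀ C ∈ S, ∀ D ∈ S, C ≠ D → Disjoint C D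

/-- A collection of pairwise disjoint chains is *interlaced* if any two of its chains are
joined by a finite sequence of chains of the collection in which consecutive chains are
linked. -/
def Interlaced (S : Finset (Finset ℤ)) : Prop :=
  ∀ C ∈ S, ∀ D ∈ S,
    Relation.ReflTransGen (fun X Y => X ∈ S ∧ Y ∈ S ∧ LinkedChains X Y) C D

/-- An *admissible configuration of size `n`*: an interlaced collection of pairwise disjoint
chains of positive integers with `n` entries in total and smallest entry equal to `1`. -/
def AdmissibleConfig (n : ℕ) (S : Finset (Finset ℤ)) : Prop :=
  IsChainCollection S ∧ Interlaced S ∧ (entriesOf S).card = n ∧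
    (∀ x ∈ entriesOf S, 0 < x) ∧ (1 : ℤ) ∈ entriesOf S

lemma fmax_mem {C : Finset ℤ} (h : C.Nonempty) : fmax C ∈ C := by
  have := Finset.max'_mem C h
  rwa [fmax, ← Finset.coe_max' h, WithBot.unbotD_coe]

lemma le_fmax {C : Finset ℤ} {x : ℤ} (hx : x ∈ C) : x ≤ fmax C := by
  rw [fmax, ← Finset.coe_max' ⟨x, hx⟩, WithBot.unbotD_coe]
  exact Finset.le_max' _ _ hx

lemma fmin_mem {C : Finset ℤ} (h : C.Nonempty) : fmin C ∈ C := by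
  have := Finset.min'_mem C h
  rwa [fmin, ← Finset.coe_min' h, WithTop.untopD_coe]

lemma fmin_le {C : Finset ℤ} {x : ℤ} (hx : x ∈ C) : fmin C ≤ x := by
  rw [fmin, ← Finset.coe_min' ⟨x, hx⟩, WithTop.untopD_coe]
  exact Finset.min'_le _ _ hx

lemma chainSet_nonempty {C : Finset ℤ} (hC : IsChainSet C) : C.Nonempty := by
  obtain ⟨c, k, rfl⟩ := hC
  exact ⟨c - 2 * (0 : ℕ), Finset.mem_image.2 ⟨0, Finset.mem_range.2 (Nat.succ_pos k), rfl⟩⟩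

/-- If `fmin C ≤ t < fmax C` for a chain `C`, then `t` or `t-1` is a non-maximal
element of `C`. -/
lemma chain_step {C : Finset ℤ} (hC : IsChainSet C) {t : ℤ}
    (h1 : fmin C ≤ t) (h2 : t < fmax C) :
    ∃ e ∈ C, e ≠ fmax C ∧ (e = t ∨ e = t - 1) := by
  obtain ⟨c, k, rfl⟩ := hC
  set C := (Finset.range (k + 1)).image (fun i : ℕ => c - 2 * (i : ℤ)) with hCdef
  have hmem : ∀ x : ℤ, x ∈ C ↔ ∃ i : ℕ, i ≤ k ∧ x = c - 2 * (i : ℤ) := by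
    intro x
    simp only [hCdef, Finset.mem_image, Finset.mem_range, Nat.lt_succ_iff]
    constructor
    · rintro ⟨i, hi, rfl⟩; exact ⟨i, hi, rfl⟩
    · rintro ⟨i, hi, rfl⟩; exact ⟨i, hi, rfl⟩
  have hcC : c ∈ C := (hmem c).2 ⟨0, Nat.zero_le _, by push_cast; ring⟩
  have hmaxle : fmax C ≤ c := by
    obtain ⟨i, _, hi⟩ := (hmem _).1 (fmax_mem ⟨c, hcC⟩)
    omega
  have hmax : fmax C = c := le_antisymm hmaxle (le_fmax hcC)
  have hminC : fmin C ∈ C := fmin_mem ⟨c, hcC⟩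
  obtain ⟨j, hj, hjeq⟩ := (hmem _).1 hminC
  have hlow : c - 2 * (k : ℤ) ≤ t := by
    have : c - 2 * (k : ℤ) ∈ C := (hmem _).2 ⟨k, le_refl _, rfl⟩
    have := fmin_le this
    omega
  have ht : t < c := by omega
  rcases Int.even_or_odd (c - t) with ⟨m, hm⟩ | ⟨m, hm⟩
  · -- t = c - 2m, 1 ≤ m ≤ k
    refine ⟨t, (hmem t).2 ⟨m.toNat, by omega, by omega⟩, by omega, Or.inl rfl⟩
  · -- t - 1 = c - 2(m+1)... c - t = 2m+1, so t-1 = c - 2(m+1)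
    refine ⟨t - 1, (hmem (t-1)).2 ⟨(m+1).toNat, by omega, by omega⟩, by omega, Or.inr rfl⟩

/-- Every entry of an admissible configuration of size `n ≥ 1` is at most `2n - 1`. -/
theorem admissible_config_entry_bound (n : ℕ) (hn : 1 ≤ n) (S : Finset (Finset ℤ))
    (hS : AdmissibleConfig n S) (x : ℤ) (hx : x ∈ entriesOf S) :
    x ≤ 2 * (n : ℤ) - 1 := by
  obtain ⟨⟨hchain, hdisj⟩, hinter, hcard, hpos, h1⟩ := hS
  set M : ℤ := fmax (entriesOf S) with hM
  have hentne : (entriesOf S).Nonempty := ⟨1, h1⟩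
  have hxM : x ≤ M := le_fmax hx
  have hM1 : (1 : ℤ) ≤ M := le_fmax h1
  -- membership in entriesOf
  have hmement : ∀ {y : ℤ} {C : Finset ℤ}, C ∈ S → y ∈ C → y ∈ entriesOf S := by
    intro y C hC hy
    exact Finset.mem_biUnion.2 ⟨C, hC, hy⟩
  -- key: every t with 1 ≤ t < M is covered by some chain's open-above interval
  have hcover : ∀ t : ℤ, 1 ≤ t → t < M → ∃ C ∈ S, fmin C ≤ t ∧ t < fmax C := by
    intro t ht1 htM
    by_contra hno
    push_neg at hno
    have hspec : ∀ C ∈ S, fmax C ≤ t ∨ t < fmin C := by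
      intro C hC
      rcases le_or_gt (fmax C) t with h | h
      · exact Or.inl h
      · exact Or.inr (by have := hno C hC; omega)
    obtain ⟨C1, hC1S, hC11⟩ := Finset.mem_biUnion.1 h1
    obtain ⟨Cs, hCsS, hCsM⟩ := Finset.mem_biUnion.1 (fmax_mem hentne)
    simp only [id_eq] at hC11 hCsM
    have hlow1 : fmax C1 ≤ t := by
      rcases hspec C1 hC1S with h | h
      · exact h
      · have := fmin_le hC11; omega
    have hlows : ∀ D : Finset ℤ,
        Relation.ReflTransGen (fun X Y => X ∈ S ∧ Y ∈ S ∧ LinkedChains X Y) C1 D →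
        fmax D ≤ t := by
      intro D hpath
      induction hpath with
      | refl => exact hlow1
      | tail _ step ih =>
        obtain ⟨hbS, hcS, _, hlink⟩ := step
        rcases hspec _ hcS with h | h
        · exact h
        · have hne := chainSet_nonempty (hchain _ hcS)
          have := fmin_le (fmax_mem hne)
          rcases hlink with ⟨h1', h2'⟩ | ⟨h1', h2'⟩ <;> omega
    have : M ≤ fmax Cs := le_fmax hCsM
    have := hlows Cs (hinter C1 hC1S Cs hCsS)
    omega
  -- the non-maximal entries
  set E' : Finset ℤ := entriesOf S \ S.image fmax with hE'
  have hmaxinj : Set.InjOn fmax S := by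
    intro C hC D hD h
    by_contra hne
    have hd := hdisj C hC D hD hne
    have h1' := fmax_mem (chainSet_nonempty (hchain C hC))
    have h2' := fmax_mem (chainSet_nonempty (hchain D hD))
    rw [h] at h1'
    exact (Finset.disjoint_left.1 hd h1') h2'
  have himsub : S.image fmax ⊆ entriesOf S := by
    intro y hy
    obtain ⟨C, hC, rfl⟩ := Finset.mem_image.1 hy
    exact hmement hC (fmax_mem (chainSet_nonempty (hchain C hC)))
  have hSne : S.Nonempty := by
    obtain ⟨C, hC, _⟩ := Finset.mem_biUnion.1 h1
    exact ⟨C, hC⟩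
  have hScard : 1 ≤ S.card := Finset.card_pos.2 hSne
  have hE'card : E'.card = n - S.card := by
    rw [hE', Finset.card_sdiff_of_subset himsub, hcard, Finset.card_image_of_injOn hmaxinj]
  -- membership in E'
  have hmemE' : ∀ {e : ℤ} {C : Finset ℤ}, C ∈ S → e ∈ C → e ≠ fmax C → e ∈ E' := by
    intro e C hC he hne
    rw [hE', Finset.mem_sdiff]
    refine ⟨hmement hC he, ?_⟩
    intro hmem
    obtain ⟨D, hD, hDe⟩ := Finset.mem_image.1 hmem
    rcases eq_or_ne D C with rfl | hDC
    · exact hne hDe.symm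
    · have hd := hdisj D hD C hC hDC
      have : fmax D ∈ D := fmax_mem (chainSet_nonempty (hchain D hD))
      rw [hDe] at this
      exact (Finset.disjoint_left.1 hd this) he
  -- the counting map
  set T : Finset ℤ := Finset.Icc 1 (M - 1) with hT
  have hchoice : ∀ t : ℤ, ∃ e : ℤ, t ∈ T → (e ∈ E' ∧ (e = t ∨ e = t - 1)) := by
    intro t
    by_cases ht : t ∈ T
    · rw [hT, Finset.mem_Icc] at ht
      obtain ⟨C, hC, hmin, hmax⟩ := hcover t ht.1 (by omega)
      obtain ⟨e, heC, hene, hor⟩ := chain_step (hchain C hC) hmin hmax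
      exact ⟨e, fun _ => ⟨hmemE' hC heC hene, hor⟩⟩
    · exact ⟨0, fun h => absurd h ht⟩
  choose g hg using hchoice
  have hinj : Set.InjOn (fun t => (g t, decide (g t = t))) T := by
    intro t1 ht1 t2 ht2 heq
    simp only [Prod.mk.injEq, decide_eq_decide] at heq
    have h1' := (hg t1 ht1).2
    have h2' := (hg t2 ht2).2
    rcases h1' with h | h <;> rcases h2' with h' | h' <;> omega
  have hmaps : ∀ t ∈ T, (g t, decide (g t = t)) ∈ E' ×ˢ (Finset.univ : Finset Bool) := by
    intro t ht
    exact Finset.mem_product.2 ⟨(hg t ht).1, Finset.mem_univ _⟩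
  have hcardle : T.card ≤ (E' ×ˢ (Finset.univ : Finset Bool)).card :=
    Finset.card_le_card_of_injOn _ hmaps hinj
  rw [Finset.card_product] at hcardle
  have hTcard : T.card = (M - 1).toNat := by
    rw [hT, Int.card_Icc]
    congr 1
    omega
  have hBool : (Finset.univ : Finset Bool).card = 2 := rfl
  rw [hTcard, hBool, hE'card] at hcardle
  omega
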